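/- Suppose for each basis function index A, the element weights ω_A^e over elements e in the support E_A of N_A sum to one: ∑_{e ∈ E_A} ω_A^e = 1. Then the Bézier projection operator Π_B is a projector onto the spline space T, i.e., Π_B(T) = T for all T ∈ T. Conversely, if Π_B(T) = T for all T ∈ T then the weights must sum to one for each A. -/
import Mathlib


/-- Bézier projection `Π_B(f) = ∑_A [∑_{e ∈ E_A} ω_A^e λ_A^e(f)] N_A` is a projector onto
the spline space (i.e. it reproduces every spline `T = ∑_B c_B N_B`) if and only if, for
every basis function index `A`, the weights over the elements in its support sum to one.
Here `lam e f A = λ_A^e(f)` are the element-level coefficients, assumed to reproduce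
spline coefficients locally, and the `N_A` are linearly independent. -/
theorem bezier_projection_projector_iff_weights_sum_one
    {V : Type*} [AddCommGroup V] [Module ℝ V] {ι El : Type*} [Fintype ι]
    (N : ι → V) (hN : LinearIndependent ℝ N)
    (EA : ι → Finset El) (ω : ι → El → ℝ) (lam : El → V → ι → ℝ)
    (hrepr : ∀ (c : ι → ℝ) (A : ι), ∀ e ∈ EA A, lam e (∑ B, c B • N B) A = c A) :
    (∀ A, ∑ e ∈ EA A, ω A e = 1) ↔
      ∀ c : ι → ℝ,
        (∑ A, (∑ e ∈ EA A, ω A e * lam e (∑ B, c B • N B) A) • N A) = ∑ B, c B • N B := by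
  have key : ∀ (c : ι → ℝ) (A : ι),
      (∑ e ∈ EA A, ω A e * lam e (∑ B, c B • N B) A) = (∑ e ∈ EA A, ω A e) * c A := by
    intro c A
    rw [Finset.sum_mul]
    exact Finset.sum_congr rfl fun e he => by rw [hrepr c A e he]
  constructor
  · intro h c
    refine Finset.sum_congr rfl fun A _ => ?_
    rw [key, h, one_mul]
  · intro h A
    have hc := h (fun _ => 1)
    rw [Finset.sum_congr rfl fun B _ => by rw [key (fun _ => 1) B]] at hc
    have hz : ∑ B, ((∑ e ∈ EA B, ω B e) * 1 - 1) • N B = 0 := by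
      simp only [sub_smul, Finset.sum_sub_distrib, hc, one_smul, sub_self]
    have := linearIndependent_iff'.mp hN Finset.univ _ hz A (Finset.mem_univ A)
    have := sub_eq_zero.mp this
    simpa using this
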